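/- Fix z ∈ ℂ⁺, N ≥ 1, α_k, β_k ≥ 1. The solution map z ↦ (u(z), v(z)) of the system u = -(1/N) Σ_k α_k/(z + α_k u + β_k v), v = -(1/N) Σ_k β_k/(z + α_k u + β_k v) is holomorphic on ℂ⁺. -/

import Mathlib

set_option linter.unusedSectionVars false
set_option maxHeartbeats 1000000

open Complex Finset Filter Topology

namespace Stmt16

variable (N : ℕ) (α β : Fin N → ℝ)

/-- denominator -/
def dd (z : ℂ) (p : ℂ × ℂ) (k : Fin N) : ℂ := z + α k * p.1 + β k * p.2

/-- one component of the iteration map -/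
noncomputable def G (γ : Fin N → ℝ) (z : ℂ) (p : ℂ × ℂ) : ℂ :=
  -(1 / N) * ∑ k, (γ k : ℂ) / (z + α k * p.1 + β k * p.2)

noncomputable def F (z : ℂ) (p : ℂ × ℂ) : ℂ × ℂ := (G N α β α z p, G N α β β z p)

/-- upper bound for `|u|` on the iteration -/
noncomputable def AA (z : ℂ) : ℝ := (1 / N) * (∑ k, α k) / z.im
noncomputable def BB (z : ℂ) : ℝ := (1 / N) * (∑ k, β k) / z.im
/-- upper bound for `Im (dd)` on the region -/
noncomputable def CC (z : ℂ) : ℝ := z.im + (∑ k, α k) * AA N α z + (∑ k, β k) * BB N β z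
/-- the contraction factor -/
noncomputable def θ (z : ℂ) : ℝ := 1 - z.im / CC N α β z
/-- upper bound for `|dd|` on the extended region -/
noncomputable def DM (z : ℂ) : ℝ :=
  ‖z‖ + (∑ k, α k) * max 1 (AA N α z) + (∑ k, β k) * max 1 (BB N β z)
/-- lower bounds for imaginary parts of iterates -/
noncomputable def epsA (z : ℂ) : ℝ := (1 / N) * (∑ k, α k) * z.im / (DM N α β z) ^ 2
noncomputable def epsB (z : ℂ) : ℝ := (1 / N) * (∑ k, β k) * z.im / (DM N α β z) ^ 2

def Pos (p : ℂ × ℂ) : Prop := 0 < p.1.im ∧ 0 < p.2.im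

def Reg (z : ℂ) (p : ℂ × ℂ) : Prop :=
  Pos p ∧ ‖p.1‖ ≤ AA N α z ∧ ‖p.2‖ ≤ BB N β z

def Reg' (z : ℂ) (p : ℂ × ℂ) : Prop :=
  Pos p ∧ ‖p.1‖ ≤ max 1 (AA N α z) ∧ ‖p.2‖ ≤ max 1 (BB N β z)

lemma Reg.reg' {z p} (h : Reg N α β z p) : Reg' N α β z p :=
  ⟨h.1, h.2.1.trans (le_max_right _ _), h.2.2.trans (le_max_right _ _)⟩

section Basic

variable {N α β}
variable (hN : 0 < N) (hα : ∀ k, 1 ≤ α k) (hβ : ∀ k, 1 ≤ β k) {z : ℂ} (hz : 0 < z.im)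

include hα hβ hz in
lemma dd_im_ge {p : ℂ × ℂ} (hp : Pos p) (k : Fin N) : z.im ≤ (dd N α β z p k).im := by
  have h1 : (dd N α β z p k).im = z.im + α k * p.1.im + β k * p.2.im := by simp [dd]
  nlinarith [hp.1, hp.2, (hα k), (hβ k)]

include hα hβ hz in
lemma dd_im_pos {p : ℂ × ℂ} (hp : Pos p) (k : Fin N) : 0 < (dd N α β z p k).im :=
  lt_of_lt_of_le hz (dd_im_ge hα hβ hz hp k)

include hα hβ hz in
lemma dd_ne {p : ℂ × ℂ} (hp : Pos p) (k : Fin N) : dd N α β z p k ≠ 0 := by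
  intro h
  have := dd_im_pos hα hβ hz hp k
  rw [h] at this; simp at this

include hα hβ hz in
lemma abs_dd_ge {p : ℂ × ℂ} (hp : Pos p) (k : Fin N) : z.im ≤ ‖dd N α β z p k‖ :=
  (dd_im_ge hα hβ hz hp k).trans ((le_abs_self _).trans (Complex.abs_im_le_norm _))

include hα hβ hz in
lemma normSq_dd_pos {p : ℂ × ℂ} (hp : Pos p) (k : Fin N) : 0 < normSq (dd N α β z p k) :=
  normSq_pos.2 (dd_ne hα hβ hz hp k)

lemma G_im {γ : Fin N → ℝ} (z : ℂ) (p : ℂ × ℂ) :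
    (G N α β γ z p).im = (1 / N) * ∑ k, γ k * (dd N α β z p k).im / normSq (dd N α β z p k) := by
  have h1 : (-(1 / (N:ℂ))) = ((-(1/N):ℝ):ℂ) := by push_cast; ring
  rw [G, h1, Complex.im_ofReal_mul, Complex.im_sum, Finset.mul_sum, Finset.mul_sum]
  refine Finset.sum_congr rfl fun k _ => ?_
  rw [show z + α k * p.1 + β k * p.2 = dd N α β z p k from rfl, Complex.div_im]
  simp

end Basic


section Basic2

variable {N : ℕ} {α β : Fin N → ℝ}
variable (hN : 0 < N) (hα : ∀ k, 1 ≤ α k) (hβ : ∀ k, 1 ≤ β k) {z : ℂ} (hz : 0 < z.im)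

include hN in
lemma sum_ge {γ : Fin N → ℝ} (hγ : ∀ k, 1 ≤ γ k) : (N : ℝ) ≤ ∑ k, γ k := by
  calc (N : ℝ) = ∑ _k : Fin N, (1:ℝ) := by simp
  _ ≤ ∑ k, γ k := Finset.sum_le_sum fun k _ => hγ k

include hN in
lemma sum_pos' {γ : Fin N → ℝ} (hγ : ∀ k, 1 ≤ γ k) : 0 < ∑ k, γ k := by
  have := sum_ge hN hγ
  have hN' : (0:ℝ) < N := by exact_mod_cast hN
  linarith

lemma γ_le_sum {γ : Fin N → ℝ} (hγ : ∀ k, 1 ≤ γ k) (k : Fin N) : γ k ≤ ∑ j, γ j :=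
  Finset.single_le_sum (fun j _ => le_trans zero_le_one (hγ j)) (Finset.mem_univ k)

include hα hβ hz in
lemma G_im_ge {γ : Fin N → ℝ} (hγ : ∀ k, 0 ≤ γ k) {p : ℂ × ℂ} (hp : Pos p) :
    (1 / N : ℝ) * ∑ k, γ k * z.im / normSq (dd N α β z p k) ≤ (G N α β γ z p).im := by
  rw [G_im]
  have hN0 : (0:ℝ) ≤ 1 / N := by positivity
  refine mul_le_mul_of_nonneg_left (Finset.sum_le_sum fun k _ => ?_) hN0
  exact div_le_div_of_nonneg_right
      (mul_le_mul_of_nonneg_left (dd_im_ge hα hβ hz hp k) (hγ k))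
      (normSq_dd_pos hα hβ hz hp k).le

include hN hα hβ hz in
lemma G_im_pos {γ : Fin N → ℝ} (hγ : ∀ k, 1 ≤ γ k) {p : ℂ × ℂ}
    (hp : Pos p) : 0 < (G N α β γ z p).im := by
  refine lt_of_lt_of_le ?_ (G_im_ge hα hβ hz (fun k => le_trans zero_le_one (hγ k)) hp)
  have hN' : (0:ℝ) < N := by exact_mod_cast hN
  refine mul_pos (by positivity) (Finset.sum_pos (fun k _ => ?_) ?_)
  · have := normSq_dd_pos hα hβ hz hp k
    have := hγ k
    positivity
  · exact Finset.univ_nonempty_iff.mpr (Fin.pos_iff_nonempty.mp hN)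

include hα hβ hz in
lemma G_abs_le {γ : Fin N → ℝ} (hγ : ∀ k, 0 ≤ γ k) {p : ℂ × ℂ}
    (hp : Pos p) :
    ‖G N α β γ z p‖ ≤ (1 / N) * (∑ k, γ k) / z.im := by
  rw [G]
  rw [norm_mul]
  have h1 : ‖(-(1 / N) : ℂ)‖ = 1 / N := by
    simp
  rw [h1]
  rw [mul_div_assoc, Finset.sum_div]
  have hN0 : (0:ℝ) ≤ 1 / N := by positivity
  refine mul_le_mul_of_nonneg_left (le_trans (norm_sum_le _ _)
    (Finset.sum_le_sum fun k _ => ?_)) hN0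
  rw [show z + α k * p.1 + β k * p.2 = dd N α β z p k from rfl, norm_div, Complex.norm_real, Real.norm_eq_abs,
    _root_.abs_of_nonneg (hγ k)]
  exact div_le_div_of_nonneg_left (hγ k) hz (abs_dd_ge hα hβ hz hp k)

include hN hα hβ hz in
lemma F_mem_Reg {p : ℂ × ℂ} (hp : Pos p) : Reg N α β z (F N α β z p) := by
  refine ⟨⟨G_im_pos hN hα hβ hz hα hp, G_im_pos hN hα hβ hz hβ hp⟩, ?_, ?_⟩
  · exact G_abs_le hα hβ hz (fun k => le_trans zero_le_one (hα k)) hp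
  · exact G_abs_le hα hβ hz (fun k => le_trans zero_le_one (hβ k)) hp

include hN hα hβ hz in
lemma AA_pos : 0 < AA N α z := by
  have h := sum_pos' hN hα
  have hN' : (0:ℝ) < N := by exact_mod_cast hN
  unfold AA; positivity

include hN hα hβ hz in
lemma BB_pos : 0 < BB N β z := by
  have h := sum_pos' hN hβ
  have hN' : (0:ℝ) < N := by exact_mod_cast hN
  unfold BB; positivity

include hN hα hβ hz in
lemma CC_gt : z.im < CC N α β z := by
  have h1 := AA_pos hN hα hβ hz
  have h2 := BB_pos hN hα hβ hz
  have h3 := sum_pos' hN hα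
  have h4 := sum_pos' hN hβ
  unfold CC; nlinarith

include hN hα hβ hz in
lemma CC_pos : 0 < CC N α β z := hz.trans (CC_gt hN hα hβ hz)

include hN hα hβ hz in
lemma θ_nonneg : 0 ≤ θ N α β z := by
  have h1 := CC_gt hN hα hβ hz
  have h2 := CC_pos hN hα hβ hz
  have : z.im / CC N α β z ≤ 1 := by
    rw [div_le_one h2]; linarith
  unfold θ; linarith

include hN hα hβ hz in
lemma θ_lt_one : θ N α β z < 1 := by
  have h2 := CC_pos hN hα hβ hz
  have : 0 < z.im / CC N α β z := by positivity
  unfold θ; linarith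

include hN hα hβ hz in
lemma DM_pos : 0 < DM N α β z := by
  have h3 := sum_pos' hN hα
  have h4 := sum_pos' hN hβ
  have h5 : 0 < ‖z‖ := by
    have : z ≠ 0 := by intro h; rw [h] at hz; simp at hz
    exact norm_pos_iff.mpr this
  have h6 : (0:ℝ) < max 1 (AA N α z) := lt_of_lt_of_le one_pos (le_max_left _ _)
  have h7 : (0:ℝ) < max 1 (BB N β z) := lt_of_lt_of_le one_pos (le_max_left _ _)
  unfold DM; positivity

include hN hα hβ hz in
lemma epsA_pos : 0 < epsA N α β z := by
  have h3 := sum_pos' hN hα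
  have h5 := DM_pos hN hα hβ hz
  have hN' : (0:ℝ) < N := by exact_mod_cast hN
  unfold epsA; positivity

include hN hα hβ hz in
lemma epsB_pos : 0 < epsB N α β z := by
  have h3 := sum_pos' hN hβ
  have h5 := DM_pos hN hα hβ hz
  have hN' : (0:ℝ) < N := by exact_mod_cast hN
  unfold epsB; positivity

include hN hα hβ hz in
lemma abs_dd_le {p : ℂ × ℂ} (hp : Reg' N α β z p) (k : Fin N) :
    ‖dd N α β z p k‖ ≤ DM N α β z := by
  have h1 : ‖dd N α β z p k‖ ≤
      ‖z‖ + α k * ‖p.1‖ + β k * ‖p.2‖ := by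
    refine le_trans (norm_add_le _ _) ?_
    have := norm_add_le z ((α k : ℂ) * p.1)
    have e1 : ‖(α k : ℂ) * p.1‖ = α k * ‖p.1‖ := by
      rw [norm_mul, Complex.norm_real, Real.norm_eq_abs, _root_.abs_of_nonneg (le_trans zero_le_one (hα k))]
    have e2 : ‖(β k : ℂ) * p.2‖ = β k * ‖p.2‖ := by
      rw [norm_mul, Complex.norm_real, Real.norm_eq_abs, _root_.abs_of_nonneg (le_trans zero_le_one (hβ k))]
    rw [e1] at this
    rw [e2]
    linarith
  refine le_trans h1 ?_
  unfold DM
  have h2 : α k * ‖p.1‖ ≤ (∑ j, α j) * max 1 (AA N α z) :=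
    mul_le_mul (γ_le_sum hα k) (hp.2.1.trans (le_refl _)) (norm_nonneg _)
      (le_trans zero_le_one (le_trans (hα k) (γ_le_sum hα k)))
  have h3 : β k * ‖p.2‖ ≤ (∑ j, β j) * max 1 (BB N β z) :=
    mul_le_mul (γ_le_sum hβ k) (hp.2.2.trans (le_refl _)) (norm_nonneg _)
      (le_trans zero_le_one (le_trans (hβ k) (γ_le_sum hβ k)))
  linarith

include hN hα hβ hz in
lemma normSq_dd_le {p : ℂ × ℂ} (hp : Reg' N α β z p) (k : Fin N) :
    normSq (dd N α β z p k) ≤ (DM N α β z) ^ 2 := by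
  rw [← Complex.sq_norm]
  have := abs_dd_le hN hα hβ hz hp k
  have h0 := norm_nonneg (dd N α β z p k)
  nlinarith

include hN hα hβ hz in
lemma G_im_ge_eps {γ : Fin N → ℝ} (hγ : ∀ k, 1 ≤ γ k) {p : ℂ × ℂ} (hp : Reg' N α β z p) :
    (1 / N) * (∑ k, γ k) * z.im / (DM N α β z) ^ 2 ≤ (G N α β γ z p).im := by
  refine le_trans ?_ (G_im_ge hα hβ hz (fun k => le_trans zero_le_one (hγ k)) hp.1)
  have hN0 : (0:ℝ) ≤ 1 / N := by positivity
  rw [div_eq_mul_inv, mul_assoc, mul_assoc]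
  refine mul_le_mul_of_nonneg_left ?_ hN0
  calc (∑ k, γ k) * (z.im * ((DM N α β z ^ 2)⁻¹)) = ∑ k, γ k * z.im / DM N α β z ^ 2 := by
        rw [Finset.sum_mul]; refine Finset.sum_congr rfl fun k _ => by ring
  _ ≤ ∑ k, γ k * z.im / normSq (dd N α β z p k) := by
        refine Finset.sum_le_sum fun k _ => ?_
        refine div_le_div_of_nonneg_left ?_ (normSq_dd_pos hα hβ hz hp.1 k)
          (normSq_dd_le hN hα hβ hz hp k)
        exact mul_nonneg (le_trans zero_le_one (hγ k)) hz.le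

include hN hα hβ hz in
lemma dd_im_le_CC {p : ℂ × ℂ} (hp : Reg N α β z p) (k : Fin N) :
    (dd N α β z p k).im ≤ CC N α β z := by
  have h1 : (dd N α β z p k).im = z.im + α k * p.1.im + β k * p.2.im := by simp [dd]
  have h2 : p.1.im ≤ AA N α z := le_trans (le_trans (le_abs_self _) (Complex.abs_im_le_norm _)) hp.2.1
  have h3 : p.2.im ≤ BB N β z := le_trans (le_trans (le_abs_self _) (Complex.abs_im_le_norm _)) hp.2.2
  have h4 : α k * p.1.im ≤ (∑ j, α j) * AA N α z := by
    have hA := AA_pos hN hα hβ hz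
    have := γ_le_sum hα k
    nlinarith [hp.1.1, (hα k)]
  have h5 : β k * p.2.im ≤ (∑ j, β j) * BB N β z := by
    have hB := BB_pos hN hα hβ hz
    have := γ_le_sum hβ k
    nlinarith [hp.1.2, (hβ k)]
  unfold CC
  linarith

end Basic2

/-- hyperbolic-type distance -/
noncomputable def ρm (p q : ℂ × ℂ) : ℝ :=
  max (‖p.1 - q.1‖ / Real.sqrt (p.1.im * q.1.im))
      (‖p.2 - q.2‖ / Real.sqrt (p.2.im * q.2.im))

lemma ρm_nonneg (p q : ℂ × ℂ) : 0 ≤ ρm p q :=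
  le_trans (by positivity) (le_max_left _ _)

lemma sqrt_cs {a b c d : ℝ} (ha : 0 ≤ a) (hb : 0 ≤ b) (hc : 0 ≤ c) (hd : 0 ≤ d) :
    Real.sqrt (a * b) + Real.sqrt (c * d) ≤ Real.sqrt ((a + c) * (b + d)) := by
  rw [Real.sqrt_mul ha, Real.sqrt_mul hc]
  refine Real.le_sqrt_of_sq_le ?_
  nlinarith [sq_nonneg (Real.sqrt a * Real.sqrt d - Real.sqrt c * Real.sqrt b),
    Real.sqrt_nonneg a, Real.sqrt_nonneg b, Real.sqrt_nonneg c, Real.sqrt_nonneg d,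
    Real.sq_sqrt ha, Real.sq_sqrt hb, Real.sq_sqrt hc, Real.sq_sqrt hd,
    mul_nonneg (Real.sqrt_nonneg a) (Real.sqrt_nonneg b),
    mul_nonneg (Real.sqrt_nonneg c) (Real.sqrt_nonneg d)]

section Contract

variable {N : ℕ} {α β : Fin N → ℝ}
variable (hN : 0 < N) (hα : ∀ k, 1 ≤ α k) (hβ : ∀ k, 1 ≤ β k) {z : ℂ} (hz : 0 < z.im)

include hN hα hβ hz in
lemma contract_component {γ : Fin N → ℝ} (hγ : ∀ k, 1 ≤ γ k)
    {p q : ℂ × ℂ} (hp : Reg N α β z p) (hq : Reg N α β z q) :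
    ‖G N α β γ z p - G N α β γ z q‖ ≤
      θ N α β z * ρm p q *
        Real.sqrt ((G N α β γ z p).im * (G N α β γ z q).im) := by
  have hγ0 : ∀ k, (0:ℝ) ≤ γ k := fun k => le_trans zero_le_one (hγ k)
  have hDne : ∀ k, dd N α β z p k ≠ 0 := dd_ne hα hβ hz hp.1
  have hEne : ∀ k, dd N α β z q k ≠ 0 := dd_ne hα hβ hz hq.1
  set D : Fin N → ℂ := dd N α β z p with hD
  set E : Fin N → ℂ := dd N α β z q with hE
  set m : ℝ := ρm p q with hm
  have hm0 : 0 ≤ m := ρm_nonneg p q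
  set w : Fin N → ℝ := fun k => Real.sqrt (α k * p.1.im + β k * p.2.im) with hw
  set w' : Fin N → ℝ := fun k => Real.sqrt (α k * q.1.im + β k * q.2.im) with hw'
  -- Step 1 : the difference identity
  have hdiff : G N α β γ z p - G N α β γ z q =
      (1 / N : ℂ) * ∑ k, (γ k : ℂ) *
        ((α k : ℂ) * (p.1 - q.1) + (β k : ℂ) * (p.2 - q.2)) / (E k * D k) := by
    calc G N α β γ z p - G N α β γ z q
        = (1 / N : ℂ) * ((∑ k, (γ k : ℂ) / E k) - ∑ k, (γ k : ℂ) / D k) := by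
          rw [G, G]
          rw [show (fun k => (γ k : ℂ) / (z + α k * p.1 + β k * p.2)) = fun k => (γ k : ℂ) / D k
            from rfl, show (fun k => (γ k : ℂ) / (z + α k * q.1 + β k * q.2))
            = fun k => (γ k : ℂ) / E k from rfl]
          ring
    _ = (1 / N : ℂ) * ∑ k, ((γ k : ℂ) / E k - (γ k : ℂ) / D k) := by
          rw [Finset.sum_sub_distrib]
    _ = _ := by
      rw [Finset.mul_sum, Finset.mul_sum]
      refine Finset.sum_congr rfl fun k _ => ?_
      rw [div_sub_div _ _ (hEne k) (hDne k)]
      have hnum : (γ k : ℂ) * D k - E k * (γ k : ℂ)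
          = (γ k : ℂ) * ((α k : ℂ) * (p.1 - q.1) + (β k : ℂ) * (p.2 - q.2)) := by
        simp only [hD, hE, dd]; ring
      rw [hnum]
  -- Step 2 : bound by real sums
  have habs : ‖G N α β γ z p - G N α β γ z q‖ ≤
      (1 / N : ℝ) * ∑ k, γ k * (α k * ‖p.1 - q.1‖ + β k * ‖p.2 - q.2‖)
        / (‖E k‖ * ‖D k‖) := by
    rw [hdiff, norm_mul]
    have h1 : ‖(1 / N : ℂ)‖ = (1 / N : ℝ) := by simp
    rw [h1]
    refine mul_le_mul_of_nonneg_left (le_trans (norm_sum_le _ _)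
      (Finset.sum_le_sum fun k _ => ?_)) (by positivity)
    rw [norm_div, norm_mul, norm_mul]
    rw [Complex.norm_real, Real.norm_eq_abs, _root_.abs_of_nonneg (hγ0 k)]
    refine div_le_div_of_nonneg_right ?_
      (mul_pos (norm_pos_iff.mpr (hEne k)) (norm_pos_iff.mpr (hDne k))).le
    refine mul_le_mul_of_nonneg_left (le_trans (norm_add_le _ _) ?_) (hγ0 k)
    rw [norm_mul, norm_mul, Complex.norm_real, Real.norm_eq_abs, Complex.norm_real, Real.norm_eq_abs,
      _root_.abs_of_nonneg (le_trans zero_le_one (hα k)),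
      _root_.abs_of_nonneg (le_trans zero_le_one (hβ k))]
  -- Step 3 : termwise bound by the hyperbolic distance
  have hterm : ∀ k, α k * ‖p.1 - q.1‖ + β k * ‖p.2 - q.2‖
      ≤ m * (w k * w' k) := by
    intro k
    have hau : 0 < p.1.im := hp.1.1
    have hav : 0 < p.2.im := hp.1.2
    have hbu : 0 < q.1.im := hq.1.1
    have hbv : 0 < q.2.im := hq.1.2
    have h1 : ‖p.1 - q.1‖ ≤ m * Real.sqrt (p.1.im * q.1.im) := by
      have hs : 0 < Real.sqrt (p.1.im * q.1.im) := Real.sqrt_pos.2 (by positivity)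
      have this : ‖p.1 - q.1‖ / Real.sqrt (p.1.im * q.1.im) ≤ m := by
        rw [hm, ρm]; exact le_max_left _ _
      calc ‖p.1 - q.1‖
          = ‖p.1 - q.1‖ / Real.sqrt (p.1.im * q.1.im)
            * Real.sqrt (p.1.im * q.1.im) := by field_simp
      _ ≤ m * Real.sqrt (p.1.im * q.1.im) := mul_le_mul_of_nonneg_right this hs.le
    have h2 : ‖p.2 - q.2‖ ≤ m * Real.sqrt (p.2.im * q.2.im) := by
      have hs : 0 < Real.sqrt (p.2.im * q.2.im) := Real.sqrt_pos.2 (by positivity)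
      have this : ‖p.2 - q.2‖ / Real.sqrt (p.2.im * q.2.im) ≤ m := by
        rw [hm, ρm]; exact le_max_right _ _
      calc ‖p.2 - q.2‖
          = ‖p.2 - q.2‖ / Real.sqrt (p.2.im * q.2.im)
            * Real.sqrt (p.2.im * q.2.im) := by field_simp
      _ ≤ m * Real.sqrt (p.2.im * q.2.im) := mul_le_mul_of_nonneg_right this hs.le
    have e1 : α k * Real.sqrt (p.1.im * q.1.im)
        = Real.sqrt ((α k * p.1.im) * (α k * q.1.im)) := by
      rw [show (α k * p.1.im) * (α k * q.1.im) = (α k)^2 * (p.1.im * q.1.im) by ring,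
        Real.sqrt_mul (sq_nonneg _), Real.sqrt_sq (le_trans zero_le_one (hα k))]
    have e2 : β k * Real.sqrt (p.2.im * q.2.im)
        = Real.sqrt ((β k * p.2.im) * (β k * q.2.im)) := by
      rw [show (β k * p.2.im) * (β k * q.2.im) = (β k)^2 * (p.2.im * q.2.im) by ring,
        Real.sqrt_mul (sq_nonneg _), Real.sqrt_sq (le_trans zero_le_one (hβ k))]
    have hcs := sqrt_cs (a := α k * p.1.im) (b := α k * q.1.im)
      (c := β k * p.2.im) (d := β k * q.2.im)
      (by nlinarith [hα k]) (by nlinarith [hα k]) (by nlinarith [hβ k]) (by nlinarith [hβ k])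
    have e3 : w k * w' k = Real.sqrt ((α k * p.1.im + β k * p.2.im)
        * (α k * q.1.im + β k * q.2.im)) := by
      rw [hw, hw', ← Real.sqrt_mul (by nlinarith [hα k, hβ k])]
    calc α k * ‖p.1 - q.1‖ + β k * ‖p.2 - q.2‖
        ≤ α k * (m * Real.sqrt (p.1.im * q.1.im)) + β k * (m * Real.sqrt (p.2.im * q.2.im)) := by
          refine add_le_add (mul_le_mul_of_nonneg_left h1 (le_trans zero_le_one (hα k)))
            (mul_le_mul_of_nonneg_left h2 (le_trans zero_le_one (hβ k)))
    _ = m * (α k * Real.sqrt (p.1.im * q.1.im) + β k * Real.sqrt (p.2.im * q.2.im)) := by ring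
    _ ≤ m * (w k * w' k) := by
          refine mul_le_mul_of_nonneg_left ?_ hm0
          rw [e1, e2, e3]
          exact hcs
  -- Step 4 : combine steps 2 and 3
  have habs2 : ‖G N α β γ z p - G N α β γ z q‖ ≤
      m * ((1 / N : ℝ) * ∑ k, γ k * (w k * w' k)
        / (‖E k‖ * ‖D k‖)) := by
    refine le_trans habs ?_
    have h1 : (1 / N : ℝ) * ∑ k, γ k * (α k * ‖p.1 - q.1‖
          + β k * ‖p.2 - q.2‖) / (‖E k‖ * ‖D k‖)
        ≤ (1 / N : ℝ) * ∑ k, γ k * (m * (w k * w' k))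
          / (‖E k‖ * ‖D k‖) := by
      refine mul_le_mul_of_nonneg_left (Finset.sum_le_sum fun k _ => ?_) (by positivity)
      refine div_le_div_of_nonneg_right ?_
        (mul_pos (norm_pos_iff.mpr (hEne k)) (norm_pos_iff.mpr (hDne k))).le
      exact mul_le_mul_of_nonneg_left (hterm k) (hγ0 k)
    refine le_trans h1 (le_of_eq ?_)
    rw [Finset.mul_sum, Finset.mul_sum, Finset.mul_sum]
    refine Finset.sum_congr rfl fun k _ => by ring
  -- Step 5 : Cauchy–Schwarz
  have hCS : (∑ k, γ k * (w k * w' k) / (‖E k‖ * ‖D k‖)) ^ 2 ≤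
      (∑ k, γ k * (w k) ^ 2 / normSq (D k)) * ∑ k, γ k * (w' k) ^ 2 / normSq (E k) := by
    refine Finset.sum_sq_le_sum_mul_sum_of_sq_eq_mul Finset.univ
      (fun k _ => ?_) (fun k _ => ?_) (fun k _ => ?_)
    · have := normSq_dd_pos hα hβ hz hp.1 k
      have := hγ0 k
      have := sq_nonneg (w k)
      positivity
    · have := normSq_dd_pos hα hβ hz hq.1 k
      have := hγ0 k
      have := sq_nonneg (w' k)
      positivity
    · have h1 : normSq (D k) = (‖D k‖) ^ 2 := (Complex.sq_norm _).symm
      have h2 : normSq (E k) = (‖E k‖) ^ 2 := (Complex.sq_norm _).symm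
      rw [h1, h2]
      have hDa : ‖D k‖ ≠ 0 := ne_of_gt (norm_pos_iff.mpr (hDne k))
      have hEa : ‖E k‖ ≠ 0 := ne_of_gt (norm_pos_iff.mpr (hEne k))
      field_simp
  -- Step 6 : self-consistent bound on the CS factors
  have hwsq : ∀ k, (w k) ^ 2 = (D k).im - z.im := by
    intro k
    rw [hw]
    have h0 : (0:ℝ) ≤ α k * p.1.im + β k * p.2.im := by
      have := hp.1.1; have := hp.1.2; nlinarith [hα k, hβ k]
    rw [Real.sq_sqrt h0]
    simp only [hD, dd]
    simp
    ring
  have hwsq' : ∀ k, (w' k) ^ 2 = (E k).im - z.im := by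
    intro k
    rw [hw']
    have h0 : (0:ℝ) ≤ α k * q.1.im + β k * q.2.im := by
      have := hq.1.1; have := hq.1.2; nlinarith [hα k, hβ k]
    rw [Real.sq_sqrt h0]
    simp only [hE, dd]
    simp
    ring
  have key : ∀ (r : ℂ × ℂ) (hr : Reg N α β z r) (ww : Fin N → ℝ)
      (hww : ∀ k, (ww k) ^ 2 = (dd N α β z r k).im - z.im),
      (1 / N : ℝ) * ∑ k, γ k * (ww k) ^ 2 / normSq (dd N α β z r k)
        ≤ θ N α β z * (G N α β γ z r).im := by
    intro r hr ww hww
    have hsplit : (1 / N : ℝ) * ∑ k, γ k * (ww k) ^ 2 / normSq (dd N α β z r k)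
        = (G N α β γ z r).im
          - z.im * ((1 / N : ℝ) * ∑ k, γ k / normSq (dd N α β z r k)) := by
      rw [G_im, Finset.mul_sum, Finset.mul_sum, Finset.mul_sum, Finset.mul_sum,
        ← Finset.sum_sub_distrib]
      refine Finset.sum_congr rfl fun k _ => ?_
      rw [hww k]
      have hns : normSq (dd N α β z r k) ≠ 0 := ne_of_gt (normSq_dd_pos hα hβ hz hr.1 k)
      field_simp
    have hCs : (G N α β γ z r).im
        ≤ CC N α β z * ((1 / N : ℝ) * ∑ k, γ k / normSq (dd N α β z r k)) := by
      rw [G_im]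
      calc (1 / N : ℝ) * ∑ k, γ k * (dd N α β z r k).im / normSq (dd N α β z r k)
          ≤ (1 / N : ℝ) * ∑ k, γ k * CC N α β z / normSq (dd N α β z r k) := by
            refine mul_le_mul_of_nonneg_left (Finset.sum_le_sum fun k _ => ?_) (by positivity)
            exact div_le_div_of_nonneg_right
              (mul_le_mul_of_nonneg_left (dd_im_le_CC hN hα hβ hz hr k) (hγ0 k))
              (normSq_dd_pos hα hβ hz hr.1 k).le
      _ = CC N α β z * ((1 / N : ℝ) * ∑ k, γ k / normSq (dd N α β z r k)) := by
            rw [Finset.mul_sum, Finset.mul_sum, Finset.mul_sum]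
            refine Finset.sum_congr rfl fun k _ => by ring
    have hC0 : 0 < CC N α β z := CC_pos hN hα hβ hz
    have hθdef : θ N α β z = 1 - z.im / CC N α β z := rfl
    set ss := (1 / N : ℝ) * ∑ k, γ k / normSq (dd N α β z r k) with hss
    rw [hsplit, hθdef]
    have hfrac : (z.im / CC N α β z) * (G N α β γ z r).im ≤ z.im * ss := by
      have h1 : (z.im / CC N α β z) * (G N α β γ z r).im
          ≤ (z.im / CC N α β z) * (CC N α β z * ss) :=
        mul_le_mul_of_nonneg_left hCs (by positivity)
      have h2 : (z.im / CC N α β z) * (CC N α β z * ss) = z.im * ss := by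
        field_simp
      linarith
    nlinarith [hfrac]
  have hf_le := key p hp w hwsq
  have hg_le := key q hq w' hwsq'
  -- Step 7 : conclude
  have hθ0 : 0 ≤ θ N α β z := θ_nonneg hN hα hβ hz
  have hGp : 0 < (G N α β γ z p).im := G_im_pos hN hα hβ hz hγ hp.1
  have hGq : 0 < (G N α β γ z q).im := G_im_pos hN hα hβ hz hγ hq.1
  have hf0 : 0 ≤ (1 / N : ℝ) * ∑ k, γ k * (w' k) ^ 2 / normSq (E k) := by
    refine mul_nonneg (by positivity) (Finset.sum_nonneg fun k _ => ?_)
    have := normSq_dd_pos hα hβ hz hq.1 k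
    have := hγ0 k
    have := sq_nonneg (w' k)
    positivity
  have hT0 : 0 ≤ (1 / N : ℝ) * ∑ k, γ k * (w k * w' k)
      / (‖E k‖ * ‖D k‖) := by
    refine mul_nonneg (by positivity) (Finset.sum_nonneg fun k _ => ?_)
    have h1 := norm_pos_iff.mpr (hEne k)
    have h2 := norm_pos_iff.mpr (hDne k)
    have h3 := Real.sqrt_nonneg (α k * p.1.im + β k * p.2.im)
    have h4 := Real.sqrt_nonneg (α k * q.1.im + β k * q.2.im)
    have h5 := hγ0 k
    have hwk : 0 ≤ w k := by rw [hw]; exact h3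
    have hwk' : 0 ≤ w' k := by rw [hw']; exact h4
    positivity
  have hT2 : ((1 / N : ℝ) * ∑ k, γ k * (w k * w' k)
      / (‖E k‖ * ‖D k‖)) ^ 2
      ≤ (θ N α β z * (G N α β γ z p).im) * (θ N α β z * (G N α β γ z q).im) := by
    have e1 : ((1 / N : ℝ) * ∑ k, γ k * (w k * w' k)
        / (‖E k‖ * ‖D k‖)) ^ 2
        = ((1 / N : ℝ) * ∑ k, γ k * (w k) ^ 2 / normSq (D k))
          * ((1 / N : ℝ) * ∑ k, γ k * (w' k) ^ 2 / normSq (E k))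
          + (((1 / N : ℝ))^2 * ((∑ k, γ k * (w k * w' k)
              / (‖E k‖ * ‖D k‖)) ^ 2
            - (∑ k, γ k * (w k) ^ 2 / normSq (D k)) * ∑ k, γ k * (w' k) ^ 2 / normSq (E k))) := by
      ring
    have e2 : ((1 / N : ℝ))^2 * ((∑ k, γ k * (w k * w' k)
          / (‖E k‖ * ‖D k‖)) ^ 2
          - (∑ k, γ k * (w k) ^ 2 / normSq (D k)) * ∑ k, γ k * (w' k) ^ 2 / normSq (E k)) ≤ 0 :=
      mul_nonpos_of_nonneg_of_nonpos (by positivity) (by linarith [hCS])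
    have e3 : ((1 / N : ℝ) * ∑ k, γ k * (w k) ^ 2 / normSq (D k))
          * ((1 / N : ℝ) * ∑ k, γ k * (w' k) ^ 2 / normSq (E k))
        ≤ (θ N α β z * (G N α β γ z p).im) * (θ N α β z * (G N α β γ z q).im) :=
      mul_le_mul hf_le hg_le hf0 (by positivity)
    linarith
  have hT : (1 / N : ℝ) * ∑ k, γ k * (w k * w' k)
      / (‖E k‖ * ‖D k‖)
      ≤ θ N α β z * Real.sqrt ((G N α β γ z p).im * (G N α β γ z q).im) := by
    have h1 := Real.le_sqrt_of_sq_le hT2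
    rw [show (θ N α β z * (G N α β γ z p).im) * (θ N α β z * (G N α β γ z q).im)
        = (θ N α β z) ^ 2 * ((G N α β γ z p).im * (G N α β γ z q).im) by ring,
      Real.sqrt_mul (sq_nonneg _), Real.sqrt_sq hθ0] at h1
    exact h1
  calc ‖G N α β γ z p - G N α β γ z q‖
      ≤ m * ((1 / N : ℝ) * ∑ k, γ k * (w k * w' k)
        / (‖E k‖ * ‖D k‖)) := habs2
  _ ≤ m * (θ N α β z * Real.sqrt ((G N α β γ z p).im * (G N α β γ z q).im)) :=
      mul_le_mul_of_nonneg_left hT hm0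
  _ = θ N α β z * m * Real.sqrt ((G N α β γ z p).im * (G N α β γ z q).im) := by ring

end Contract


/-- the fixed-point iteration -/
noncomputable def seq (N : ℕ) (α β : Fin N → ℝ) (z : ℂ) : ℕ → ℂ × ℂ
  | 0 => (Complex.I, Complex.I)
  | n + 1 => F N α β z (seq N α β z n)

/-- uniform bound for the first distance in the hyperbolic metric -/
noncomputable def M0 (N : ℕ) (α β : Fin N → ℝ) (z : ℂ) : ℝ := 2 * DM N α β z ^ 2 / z.im ^ 2

/-- geometric prefactor -/
noncomputable def KK (N : ℕ) (α β : Fin N → ℝ) (z : ℂ) : ℝ :=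
  max (AA N α z) (BB N β z) * M0 N α β z

section Sequence

variable {N : ℕ} {α β : Fin N → ℝ}
variable (hN : 0 < N) (hα : ∀ k, 1 ≤ α k) (hβ : ∀ k, 1 ≤ β k) {z : ℂ} (hz : 0 < z.im)

include hN hα hβ hz in
lemma seq_pos : ∀ n, Pos (seq N α β z n) := by
  intro n
  induction n with
  | zero => exact ⟨by simp [seq], by simp [seq]⟩
  | succ n ih => exact (F_mem_Reg hN hα hβ hz ih).1

include hN hα hβ hz in
lemma seq_reg (n : ℕ) : Reg N α β z (seq N α β z (n + 1)) :=
  F_mem_Reg hN hα hβ hz (seq_pos hN hα hβ hz n)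

include hN hα hβ hz in
lemma seq_reg' : ∀ n, Reg' N α β z (seq N α β z n) := by
  intro n
  cases n with
  | zero =>
    refine ⟨⟨by simp [seq], by simp [seq]⟩, ?_, ?_⟩
    · simp [seq]
    · simp [seq]
  | succ n => exact (seq_reg hN hα hβ hz n).reg'

include hN hα hβ hz in
lemma seq_im_ge_A (n : ℕ) : epsA N α β z ≤ (seq N α β z (n + 1)).1.im := by
  have := G_im_ge_eps hN hα hβ hz hα (seq_reg' hN hα hβ hz n)
  rw [show (seq N α β z (n+1)).1 = G N α β α z (seq N α β z n) from rfl]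
  exact le_trans (le_of_eq (by rw [epsA])) this

include hN hα hβ hz in
lemma seq_im_ge_B (n : ℕ) : epsB N α β z ≤ (seq N α β z (n + 1)).2.im := by
  have := G_im_ge_eps hN hα hβ hz hβ (seq_reg' hN hα hβ hz n)
  rw [show (seq N α β z (n+1)).2 = G N α β β z (seq N α β z n) from rfl]
  exact le_trans (le_of_eq (by rw [epsB])) this

include hN hα hβ hz in
lemma contract_pair {p q : ℂ × ℂ} (hp : Reg N α β z p) (hq : Reg N α β z q) :
    ρm (F N α β z p) (F N α β z q) ≤ θ N α β z * ρm p q := by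
  have h1 := contract_component hN hα hβ hz hα hp hq
  have h2 := contract_component hN hα hβ hz hβ hp hq
  have hGp1 : 0 < (G N α β α z p).im := G_im_pos hN hα hβ hz hα hp.1
  have hGq1 : 0 < (G N α β α z q).im := G_im_pos hN hα hβ hz hα hq.1
  have hGp2 : 0 < (G N α β β z p).im := G_im_pos hN hα hβ hz hβ hp.1
  have hGq2 : 0 < (G N α β β z q).im := G_im_pos hN hα hβ hz hβ hq.1
  rw [ρm]
  refine max_le ?_ ?_
  · have hs : 0 < Real.sqrt ((F N α β z p).1.im * (F N α β z q).1.im) := by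
      refine Real.sqrt_pos.2 (mul_pos hGp1 hGq1)
    rw [div_le_iff₀ hs]
    refine le_trans h1 (le_of_eq ?_)
    rw [show (F N α β z p).1 = G N α β α z p from rfl,
      show (F N α β z q).1 = G N α β α z q from rfl]
  · have hs : 0 < Real.sqrt ((F N α β z p).2.im * (F N α β z q).2.im) := by
      refine Real.sqrt_pos.2 (mul_pos hGp2 hGq2)
    rw [div_le_iff₀ hs]
    refine le_trans h2 (le_of_eq ?_)
    rw [show (F N α β z p).2 = G N α β β z p from rfl,
      show (F N α β z q).2 = G N α β β z q from rfl]

include hN hα hβ hz in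
lemma mseq_first : ρm (seq N α β z 1) (seq N α β z 2) ≤ M0 N α β z := by
  have hr1 := seq_reg hN hα hβ hz 0
  have hr2 := seq_reg hN hα hβ hz 1
  have hiA1 := seq_im_ge_A hN hα hβ hz 0
  have hiA2 := seq_im_ge_A hN hα hβ hz 1
  have hiB1 := seq_im_ge_B hN hα hβ hz 0
  have hiB2 := seq_im_ge_B hN hα hβ hz 1
  have heA := epsA_pos hN hα hβ hz
  have heB := epsB_pos hN hα hβ hz
  have hAp := AA_pos hN hα hβ hz
  have hBp := BB_pos hN hα hβ hz
  have hDMp := DM_pos hN hα hβ hz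
  rw [ρm]
  have comp1 : ‖(seq N α β z 1).1 - (seq N α β z 2).1‖
      / Real.sqrt ((seq N α β z 1).1.im * (seq N α β z 2).1.im)
      ≤ 2 * AA N α z / epsA N α β z := by
    refine div_le_div₀ (by positivity) ?_ heA ?_
    · calc ‖(seq N α β z 1).1 - (seq N α β z 2).1‖
          ≤ ‖(seq N α β z 1).1‖ + ‖(seq N α β z 2).1‖ := by
            rw [sub_eq_add_neg]
            refine le_trans (norm_add_le _ _) (by simp)
      _ ≤ 2 * AA N α z := by
            have := hr1.2.1
            have := hr2.2.1
            linarith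
    · calc epsA N α β z = Real.sqrt (epsA N α β z * epsA N α β z) :=
            (Real.sqrt_mul_self heA.le).symm
      _ ≤ Real.sqrt ((seq N α β z 1).1.im * (seq N α β z 2).1.im) := by
            refine Real.sqrt_le_sqrt ?_
            nlinarith
  have comp2 : ‖(seq N α β z 1).2 - (seq N α β z 2).2‖
      / Real.sqrt ((seq N α β z 1).2.im * (seq N α β z 2).2.im)
      ≤ 2 * BB N β z / epsB N α β z := by
    refine div_le_div₀ (by positivity) ?_ heB ?_
    · calc ‖(seq N α β z 1).2 - (seq N α β z 2).2‖
          ≤ ‖(seq N α β z 1).2‖ + ‖(seq N α β z 2).2‖ := by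
            rw [sub_eq_add_neg]
            refine le_trans (norm_add_le _ _) (by simp)
      _ ≤ 2 * BB N β z := by
            have := hr1.2.2
            have := hr2.2.2
            linarith
    · calc epsB N α β z = Real.sqrt (epsB N α β z * epsB N α β z) :=
            (Real.sqrt_mul_self heB.le).symm
      _ ≤ Real.sqrt ((seq N α β z 1).2.im * (seq N α β z 2).2.im) := by
            refine Real.sqrt_le_sqrt ?_
            nlinarith
  have eqA : 2 * AA N α z / epsA N α β z = M0 N α β z := by
    have hSa := sum_pos' hN hα
    have hN' : (0:ℝ) < N := by exact_mod_cast hN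
    rw [AA, epsA, M0]
    field_simp
  have eqB : 2 * BB N β z / epsB N α β z = M0 N α β z := by
    have hSb := sum_pos' hN hβ
    have hN' : (0:ℝ) < N := by exact_mod_cast hN
    rw [BB, epsB, M0]
    field_simp
  refine max_le (le_trans comp1 (le_of_eq eqA)) (le_trans comp2 (le_of_eq eqB))

include hN hα hβ hz in
lemma mseq_le (n : ℕ) : ρm (seq N α β z (n + 1)) (seq N α β z (n + 2))
    ≤ θ N α β z ^ n * M0 N α β z := by
  induction n with
  | zero => simpa using mseq_first hN hα hβ hz
  | succ n ih =>
    have h1 : ρm (seq N α β z (n + 2)) (seq N α β z (n + 3))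
        ≤ θ N α β z * ρm (seq N α β z (n + 1)) (seq N α β z (n + 2)) :=
      contract_pair hN hα hβ hz (seq_reg hN hα hβ hz n) (seq_reg hN hα hβ hz (n + 1))
    have hθ0 := θ_nonneg hN hα hβ hz
    calc ρm (seq N α β z (n + 2)) (seq N α β z (n + 3))
        ≤ θ N α β z * (θ N α β z ^ n * M0 N α β z) :=
          le_trans h1 (mul_le_mul_of_nonneg_left ih hθ0)
    _ = θ N α β z ^ (n + 1) * M0 N α β z := by ring

include hN hα hβ hz in
lemma dist_seq_le (n : ℕ) : dist (seq N α β z (n + 1)) (seq N α β z (n + 2))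
    ≤ KK N α β z * θ N α β z ^ n := by
  have hr1 := seq_reg hN hα hβ hz n
  have hr2 := seq_reg hN hα hβ hz (n + 1)
  have hmle := mseq_le hN hα hβ hz n
  have hAp := AA_pos hN hα hβ hz
  have hBp := BB_pos hN hα hβ hz
  have hρ0 := ρm_nonneg (seq N α β z (n + 1)) (seq N α β z (n + 2))
  have hM0 : 0 ≤ M0 N α β z := by
    have := DM_pos hN hα hβ hz
    rw [M0]; positivity
  have hθ0 := θ_nonneg hN hα hβ hz
  rw [Prod.dist_eq]
  have key : ∀ (a b : ℂ) (hab : ‖a - b‖ / Real.sqrt (a.im * b.im)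
        ≤ ρm (seq N α β z (n + 1)) (seq N α β z (n + 2)))
      (ha : 0 < a.im) (hb : 0 < b.im)
      (haA : a.im ≤ max (AA N α z) (BB N β z)) (hbA : b.im ≤ max (AA N α z) (BB N β z)),
      dist a b ≤ KK N α β z * θ N α β z ^ n := by
    intro a b hab ha hb haA hbA
    have hs : 0 < Real.sqrt (a.im * b.im) := Real.sqrt_pos.2 (mul_pos ha hb)
    have h1 : ‖a - b‖ ≤ ρm (seq N α β z (n + 1)) (seq N α β z (n + 2))
        * Real.sqrt (a.im * b.im) := by
      rw [← div_le_iff₀ hs]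
      exact hab
    have hmaxpos : 0 < max (AA N α z) (BB N β z) := lt_max_of_lt_left hAp
    have h2 : Real.sqrt (a.im * b.im) ≤ max (AA N α z) (BB N β z) := by
      calc Real.sqrt (a.im * b.im)
          ≤ Real.sqrt (max (AA N α z) (BB N β z) * max (AA N α z) (BB N β z)) := by
            refine Real.sqrt_le_sqrt ?_
            nlinarith
      _ = max (AA N α z) (BB N β z) := Real.sqrt_mul_self hmaxpos.le
    calc dist a b = ‖a - b‖ := Complex.dist_eq a b
    _ ≤ ρm (seq N α β z (n + 1)) (seq N α β z (n + 2)) * Real.sqrt (a.im * b.im) := h1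
    _ ≤ (θ N α β z ^ n * M0 N α β z) * max (AA N α z) (BB N β z) := by
        refine mul_le_mul hmle h2 hs.le (by positivity)
    _ = KK N α β z * θ N α β z ^ n := by rw [KK]; ring
  refine max_le ?_ ?_
  · refine key _ _ ?_ hr1.1.1 hr2.1.1 ?_ ?_
    · rw [ρm]; exact le_max_left _ _
    · exact le_trans (le_trans (le_abs_self _) (Complex.abs_im_le_norm _))
        (le_trans hr1.2.1 (le_max_left _ _))
    · exact le_trans (le_trans (le_abs_self _) (Complex.abs_im_le_norm _))
        (le_trans hr2.2.1 (le_max_left _ _))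
  · refine key _ _ ?_ hr1.1.2 hr2.1.2 ?_ ?_
    · rw [ρm]; exact le_max_right _ _
    · exact le_trans (le_trans (le_abs_self _) (Complex.abs_im_le_norm _))
        (le_trans hr1.2.2 (le_max_right _ _))
    · exact le_trans (le_trans (le_abs_self _) (Complex.abs_im_le_norm _))
        (le_trans hr2.2.2 (le_max_right _ _))

end Sequence

/-- the limit of the iteration (junk value off the upper half-plane) -/
noncomputable def limP (N : ℕ) (α β : Fin N → ℝ) (z : ℂ) : ℂ × ℂ :=
  limUnder atTop (fun n => seq N α β z (n + 1))

/-- uniform versions of the constants on `{η₀ ≤ im z, |z| ≤ R}` -/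
noncomputable def A0 (N : ℕ) (α : Fin N → ℝ) (η₀ : ℝ) : ℝ := (1 / N) * (∑ k, α k) / η₀
noncomputable def DM0 (N : ℕ) (α β : Fin N → ℝ) (η₀ R : ℝ) : ℝ :=
  R + (∑ k, α k) * max 1 (A0 N α η₀) + (∑ k, β k) * max 1 (A0 N β η₀)
noncomputable def K0 (N : ℕ) (α β : Fin N → ℝ) (η₀ R : ℝ) : ℝ :=
  max (A0 N α η₀) (A0 N β η₀) * (2 * DM0 N α β η₀ R ^ 2 / η₀ ^ 2)
noncomputable def θ0 (N : ℕ) (α β : Fin N → ℝ) (η₀ : ℝ) : ℝ :=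
  1 - η₀ ^ 2 / (η₀ ^ 2 + ((∑ k, α k) ^ 2 + (∑ k, β k) ^ 2) / N)

section Uniform

variable {N : ℕ} {α β : Fin N → ℝ}
variable (hN : 0 < N) (hα : ∀ k, 1 ≤ α k) (hβ : ∀ k, 1 ≤ β k) {z : ℂ} (hz : 0 < z.im)
variable {η₀ R : ℝ} (hη₀ : 0 < η₀) (hηz : η₀ ≤ z.im) (hR : ‖z‖ ≤ R)

include hN hα hβ in
lemma θ0_nonneg (hη₀ : 0 < η₀) : 0 ≤ θ0 N α β η₀ := by
  have hN' : (0:ℝ) < N := by exact_mod_cast hN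
  have hc : 0 ≤ ((∑ k, α k) ^ 2 + (∑ k, β k) ^ 2) / N := by positivity
  have h1 : η₀ ^ 2 / (η₀ ^ 2 + ((∑ k, α k) ^ 2 + (∑ k, β k) ^ 2) / N) ≤ 1 := by
    rw [div_le_one (by positivity)]
    linarith
  rw [θ0]; linarith

include hN hα hβ in
lemma θ0_lt_one (hη₀ : 0 < η₀) : θ0 N α β η₀ < 1 := by
  have hN' : (0:ℝ) < N := by exact_mod_cast hN
  have hSa := sum_pos' hN hα
  have hSb := sum_pos' hN hβ
  have h1 : 0 < η₀ ^ 2 / (η₀ ^ 2 + ((∑ k, α k) ^ 2 + (∑ k, β k) ^ 2) / N) := by positivity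
  rw [θ0]; linarith

include hN hα hβ hz hη₀ hηz in
lemma θ_le_θ0 : θ N α β z ≤ θ0 N α β η₀ := by
  have hN' : (0:ℝ) < N := by exact_mod_cast hN
  have hSa := sum_pos' hN hα
  have hSb := sum_pos' hN hβ
  set c : ℝ := ((∑ k, α k) ^ 2 + (∑ k, β k) ^ 2) / N with hc
  have hc0 : 0 < c := by positivity
  have hCC : CC N α β z = (z.im ^ 2 + c) / z.im := by
    rw [CC, AA, BB, hc]
    field_simp
    ring
  have h1 : z.im / CC N α β z = z.im ^ 2 / (z.im ^ 2 + c) := by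
    rw [hCC]
    rw [div_div_eq_mul_div]
    ring_nf
  have h2 : η₀ ^ 2 / (η₀ ^ 2 + c) ≤ z.im ^ 2 / (z.im ^ 2 + c) := by
    rw [div_le_div_iff₀ (by positivity) (by positivity)]
    nlinarith [mul_nonneg (mul_nonneg hc0.le (sub_nonneg.2 hηz))
      (le_of_lt (by linarith : (0:ℝ) < z.im + η₀))]
  rw [θ, θ0, h1, ← hc]
  linarith

include hN hα hβ hz hη₀ hηz in
lemma AA_le_A0 : AA N α z ≤ A0 N α η₀ := by
  have hSa := sum_pos' hN hα
  have hN' : (0:ℝ) < N := by exact_mod_cast hN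
  rw [AA, A0]
  exact div_le_div_of_nonneg_left (by positivity) hη₀ hηz

include hN hα hβ hz hη₀ hηz in
lemma BB_le_B0 : BB N β z ≤ A0 N β η₀ := by
  have hSb := sum_pos' hN hβ
  have hN' : (0:ℝ) < N := by exact_mod_cast hN
  rw [BB, A0]
  exact div_le_div_of_nonneg_left (by positivity) hη₀ hηz

include hN hα hβ hz hη₀ hηz hR in
lemma DM_le_DM0 : DM N α β z ≤ DM0 N α β η₀ R := by
  have hSa := sum_pos' hN hα
  have hSb := sum_pos' hN hβ
  have h1 : max 1 (AA N α z) ≤ max 1 (A0 N α η₀) :=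
    max_le_max le_rfl (AA_le_A0 hN hα hβ hz hη₀ hηz)
  have h2 : max 1 (BB N β z) ≤ max 1 (A0 N β η₀) :=
    max_le_max le_rfl (BB_le_B0 hN hα hβ hz hη₀ hηz)
  rw [DM, DM0]
  have h3 : (∑ k, α k) * max 1 (AA N α z) ≤ (∑ k, α k) * max 1 (A0 N α η₀) :=
    mul_le_mul_of_nonneg_left h1 hSa.le
  have h4 : (∑ k, β k) * max 1 (BB N β z) ≤ (∑ k, β k) * max 1 (A0 N β η₀) :=
    mul_le_mul_of_nonneg_left h2 hSb.le
  linarith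

include hN hα hβ hz hη₀ hηz hR in
lemma KK_le_K0 : KK N α β z ≤ K0 N α β η₀ R := by
  have hAp := AA_pos hN hα hβ hz
  have hBp := BB_pos hN hα hβ hz
  have hDMp := DM_pos hN hα hβ hz
  have hDM0p : 0 < DM0 N α β η₀ R := lt_of_lt_of_le hDMp (DM_le_DM0 hN hα hβ hz hη₀ hηz hR)
  have h1 : max (AA N α z) (BB N β z) ≤ max (A0 N α η₀) (A0 N β η₀) :=
    max_le_max (AA_le_A0 hN hα hβ hz hη₀ hηz) (BB_le_B0 hN hα hβ hz hη₀ hηz)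
  have h2 : M0 N α β z ≤ 2 * DM0 N α β η₀ R ^ 2 / η₀ ^ 2 := by
    rw [M0]
    have hDM := DM_le_DM0 hN hα hβ hz hη₀ hηz hR
    refine div_le_div₀ (by positivity) (by nlinarith) (by positivity) (by nlinarith)
  rw [KK, K0]
  have hM0 : 0 ≤ M0 N α β z := by rw [M0]; positivity
  refine mul_le_mul h1 h2 hM0 (le_trans (lt_max_of_lt_left hAp).le h1)

include hN hα hβ hz hη₀ hηz hR in
lemma dist_seq_le_uniform (n : ℕ) :
    dist (seq N α β z (n + 1)) (seq N α β z (n + 2)) ≤ K0 N α β η₀ R * θ0 N α β η₀ ^ n := by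
  refine le_trans (dist_seq_le hN hα hβ hz n) ?_
  have h1 := KK_le_K0 hN hα hβ hz hη₀ hηz hR
  have h2 := θ_le_θ0 hN hα hβ hz hη₀ hηz
  have hθ0 := θ_nonneg hN hα hβ hz
  have hK : 0 ≤ KK N α β z := by
    have hAp := AA_pos hN hα hβ hz
    have hDMp := DM_pos hN hα hβ hz
    rw [KK, M0]
    positivity
  refine mul_le_mul h1 (pow_le_pow_left₀ hθ0 h2 n) (by positivity) (le_trans hK h1)

include hN hα hβ hz in
lemma cauchy_seq : CauchySeq (fun n => seq N α β z (n + 1)) := by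
  have hη₀ : 0 < z.im := hz
  refine cauchySeq_of_le_geometric (θ0 N α β z.im) (K0 N α β z.im (‖z‖))
    (θ0_lt_one hN hα hβ hη₀) (fun n => ?_)
  exact dist_seq_le_uniform hN hα hβ hz hη₀ le_rfl le_rfl n

include hN hα hβ hz in
lemma tendsto_limP : Tendsto (fun n => seq N α β z (n + 1)) atTop (𝓝 (limP N α β z)) :=
  (cauchy_seq hN hα hβ hz).tendsto_limUnder

include hN hα hβ hz hη₀ hηz hR in
lemma dist_limP_le (n : ℕ) :
    dist (seq N α β z (n + 1)) (limP N α β z)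
      ≤ K0 N α β η₀ R * θ0 N α β η₀ ^ n / (1 - θ0 N α β η₀) :=
  dist_le_of_le_geometric_of_tendsto (θ0 N α β η₀) (K0 N α β η₀ R)
    (θ0_lt_one hN hα hβ hη₀)
    (fun n => dist_seq_le_uniform hN hα hβ hz hη₀ hηz hR n)
    (tendsto_limP hN hα hβ hz) n

end Uniform

section Final

variable {N : ℕ} {α β : Fin N → ℝ}
variable (hN : 0 < N) (hα : ∀ k, 1 ≤ α k) (hβ : ∀ k, 1 ≤ β k)

lemma upper_open : IsOpen {z : ℂ | 0 < z.im} := isOpen_lt continuous_const Complex.continuous_im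

include hN hα hβ in
lemma seq_diff (n : ℕ) :
    DifferentiableOn ℂ (fun z => seq N α β z n) {z : ℂ | 0 < z.im} := by
  induction n with
  | zero =>
    exact (differentiableOn_const (Complex.I, Complex.I)).congr (fun z _ => by simp [seq])
  | succ n ih =>
    have h1 : DifferentiableOn ℂ (fun z => (seq N α β z n).1) {z : ℂ | 0 < z.im} := ih.fst
    have h2 : DifferentiableOn ℂ (fun z => (seq N α β z n).2) {z : ℂ | 0 < z.im} := ih.snd
    have hden : ∀ k : Fin N, DifferentiableOn ℂ
        (fun z => z + (α k : ℂ) * (seq N α β z n).1 + (β k : ℂ) * (seq N α β z n).2)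
        {z : ℂ | 0 < z.im} :=
      fun k => (differentiableOn_id.add (h1.const_mul _)).add (h2.const_mul _)
    have hne : ∀ k : Fin N, ∀ z ∈ {z : ℂ | 0 < z.im},
        z + (α k : ℂ) * (seq N α β z n).1 + (β k : ℂ) * (seq N α β z n).2 ≠ 0 := by
      intro k z hz
      exact dd_ne hα hβ hz (seq_pos hN hα hβ hz n) k
    have hG : ∀ γ : Fin N → ℝ, DifferentiableOn ℂ
        (fun z => G N α β γ z (seq N α β z n)) {z : ℂ | 0 < z.im} := by
      intro γ
      refine DifferentiableOn.const_mul ?_ _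
      refine DifferentiableOn.fun_sum fun k _ => ?_
      exact (differentiableOn_const _).div (hden k) (hne k)
    exact ((hG α).prodMk (hG β)).congr (fun z _ => by rw [show seq N α β z (n+1)
      = (G N α β α z (seq N α β z n), G N α β β z (seq N α β z n)) from rfl])

include hN hα hβ in
lemma limP_fixed {z : ℂ} (hz : 0 < z.im) :
    epsA N α β z ≤ (limP N α β z).1.im ∧ epsB N α β z ≤ (limP N α β z).2.im ∧
      limP N α β z = F N α β z (limP N α β z) := by
  have hf := tendsto_limP hN hα hβ hz
  have hu : Tendsto (fun n => (seq N α β z (n+1)).1) atTop (𝓝 (limP N α β z).1) :=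
    ((continuous_fst.tendsto _).comp hf)
  have hv : Tendsto (fun n => (seq N α β z (n+1)).2) atTop (𝓝 (limP N α β z).2) :=
    ((continuous_snd.tendsto _).comp hf)
  have himu : Tendsto (fun n => (seq N α β z (n+1)).1.im) atTop (𝓝 (limP N α β z).1.im) :=
    (Complex.continuous_im.tendsto _).comp hu
  have himv : Tendsto (fun n => (seq N α β z (n+1)).2.im) atTop (𝓝 (limP N α β z).2.im) :=
    (Complex.continuous_im.tendsto _).comp hv
  have hA : epsA N α β z ≤ (limP N α β z).1.im :=
    ge_of_tendsto' himu (fun n => seq_im_ge_A hN hα hβ hz n)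
  have hB : epsB N α β z ≤ (limP N α β z).2.im :=
    ge_of_tendsto' himv (fun n => seq_im_ge_B hN hα hβ hz n)
  have hPos : Pos (limP N α β z) :=
    ⟨lt_of_lt_of_le (epsA_pos hN hα hβ hz) hA, lt_of_lt_of_le (epsB_pos hN hα hβ hz) hB⟩
  refine ⟨hA, hB, ?_⟩
  have hGt : ∀ γ : Fin N → ℝ, Tendsto (fun n => G N α β γ z (seq N α β z (n+1))) atTop
      (𝓝 (G N α β γ z (limP N α β z))) := by
    intro γ
    refine Tendsto.const_mul _ (tendsto_finset_sum _ fun k _ => ?_)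
    refine Tendsto.div tendsto_const_nhds ?_ ?_
    · exact (tendsto_const_nhds.add (tendsto_const_nhds.mul hu)).add
        (tendsto_const_nhds.mul hv)
    · exact dd_ne hα hβ hz hPos k
  have hF2 : Tendsto (fun n => F N α β z (seq N α β z (n+1))) atTop
      (𝓝 (F N α β z (limP N α β z))) := (hGt α).prodMk_nhds (hGt β)
  have hshift : Tendsto (fun n => seq N α β z (n+2)) atTop (𝓝 (limP N α β z)) :=
    hf.comp (tendsto_add_atTop_nat 1)
  have : (fun n => seq N α β z (n+2)) = fun n => F N α β z (seq N α β z (n+1)) := rfl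
  rw [this] at hshift
  exact tendsto_nhds_unique hshift hF2

include hN hα hβ in
lemma tlu : TendstoLocallyUniformlyOn (fun n (z : ℂ) => seq N α β z (n+1)) (limP N α β)
    atTop {z : ℂ | 0 < z.im} := by
  rw [tendstoLocallyUniformlyOn_iff_forall_isCompact upper_open]
  intro K hKsub hK
  rcases K.eq_empty_or_nonempty with rfl | hne
  · rw [Metric.tendstoUniformlyOn_iff]
    intro ε hε
    filter_upwards with n x hx
    exact absurd hx (by simp)
  obtain ⟨z₀, hz₀K, hz₀min⟩ := hK.exists_isMinOn hne Complex.continuous_im.continuousOn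
  obtain ⟨z₁, hz₁K, hz₁max⟩ := hK.exists_isMaxOn hne continuous_norm.continuousOn
  have hη₀ : 0 < z₀.im := hKsub hz₀K
  set η₀ := z₀.im with hη₀def
  set R := ‖z₁‖ with hRdef
  have hθ0n : 0 ≤ θ0 N α β η₀ := θ0_nonneg hN hα hβ hη₀
  have hθ01 : θ0 N α β η₀ < 1 := θ0_lt_one hN hα hβ hη₀
  rw [Metric.tendstoUniformlyOn_iff]
  intro ε hε
  have hgeo : Tendsto (fun n : ℕ => K0 N α β η₀ R * θ0 N α β η₀ ^ n / (1 - θ0 N α β η₀))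
      atTop (𝓝 0) := by
    have h1 : Tendsto (fun n : ℕ => θ0 N α β η₀ ^ n) atTop (𝓝 0) :=
      tendsto_pow_atTop_nhds_zero_of_lt_one hθ0n hθ01
    have h2 := (h1.const_mul (K0 N α β η₀ R)).div_const (1 - θ0 N α β η₀)
    simpa using h2
  filter_upwards [hgeo.eventually (gt_mem_nhds hε)] with n hn z hzK
  have hz : 0 < z.im := hKsub hzK
  have h3 : dist (seq N α β z (n+1)) (limP N α β z)
      ≤ K0 N α β η₀ R * θ0 N α β η₀ ^ n / (1 - θ0 N α β η₀) :=
    dist_limP_le hN hα hβ hz hη₀ (hz₀min hzK) (hz₁max hzK) n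
  rw [dist_comm]
  exact lt_of_le_of_lt h3 hn

end Final

end Stmt16

open Stmt16 in
/-- the solution map `z ↦ (u(z), v(z))` of the self-consistent system is
holomorphic on the upper half-plane. -/
theorem stmt_16 (N : ℕ) (hN : 1 ≤ N)
    (α β : Fin N → ℝ) (hα : ∀ k, 1 ≤ α k) (hβ : ∀ k, 1 ≤ β k) :
    ∃ u v : ℂ → ℂ,
      DifferentiableOn ℂ u {z : ℂ | 0 < z.im} ∧
      DifferentiableOn ℂ v {z : ℂ | 0 < z.im} ∧
      ∀ z : ℂ, 0 < z.im →
        0 < (u z).im ∧ 0 < (v z).im ∧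
        u z = -(1 / N) * ∑ k, (α k : ℂ) / (z + α k * u z + β k * v z) ∧
        v z = -(1 / N) * ∑ k, (β k : ℂ) / (z + α k * u z + β k * v z) := by
  have hN0 : 0 < N := hN
  have hdiff : DifferentiableOn ℂ (limP N α β) {z : ℂ | 0 < z.im} :=
    (tlu hN0 hα hβ).differentiableOn
      (Filter.Eventually.of_forall fun n => seq_diff hN0 hα hβ (n+1)) upper_open
  refine ⟨fun z => (limP N α β z).1, fun z => (limP N α β z).2, hdiff.fst, hdiff.snd, ?_⟩
  intro z hz
  obtain ⟨hA, hB, heq⟩ := limP_fixed hN0 hα hβ hz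
  refine ⟨lt_of_lt_of_le (epsA_pos hN0 hα hβ hz) hA,
    lt_of_lt_of_le (epsB_pos hN0 hα hβ hz) hB, ?_, ?_⟩
  · have := congrArg Prod.fst heq
    simpa [F, G] using this
  · have := congrArg Prod.snd heq
    simpa [F, G] using this
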